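/- Let (Ω, F, P) be a probability space with a filtration {∅,Ω} = F₀ ⊆ F₁ ⊆ ⋯ ⊆ F_r ⊆ F, and let (X_i)_{i=0}^r be a martingale difference with respect to it: X₀ = 0, each X_i is F_i-measurable and bounded, and E[X_i | F_{i−1}] = 0 almost surely for 1 ≤ i ≤ r. Suppose there exist reals M > 0 and σ > 0 such that |X_i| ≤ M almost surely for all 1 ≤ i ≤ r and Σ_{i=1}^r E[X_i² | F_{i−1}] ≤ σ² almost surely. Define X = Σ_{i=1}^r X_i. Then for every t ≥ 0: Pr[X ≥ t] ≤ exp(−(σ²/M²)·𝒞(t·M/σ²)). -/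

import Mathlib

open MeasureTheory Real
open scoped BigOperators

noncomputable section

/-- The Bennett function `𝒞(x) = (x+1)·ln(x+1) − x`. -/
def bennett (x : ℝ) : ℝ := (x + 1) * Real.log (x + 1) - x


lemma exp_tail (x : ℝ) :
    Real.exp x - 1 - x = ∑' n : ℕ, x ^ (n + 2) / ((n + 2).factorial : ℝ) := by
  have h := Real.summable_pow_div_factorial x
  have h2 := Summable.sum_add_tsum_nat_add (f := fun n => x ^ n / (n.factorial : ℝ)) 2 h
  have hx : Real.exp x = ∑' n : ℕ, x ^ n / (n.factorial : ℝ) := by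
    rw [Real.exp_eq_exp_ℝ, NormedSpace.exp_eq_tsum_div]
  rw [hx, ← h2]
  simp [Finset.sum_range_succ]
  ring

lemma bennett_aux {a b : ℝ} (hab : |a| ≤ b) :
    (Real.exp a - 1 - a) * b ^ 2 ≤ (Real.exp b - 1 - b) * a ^ 2 := by
  rw [exp_tail a, exp_tail b, ← tsum_mul_right, ← tsum_mul_right]
  apply Summable.tsum_le_tsum _
    (((summable_nat_add_iff 2).2 (Real.summable_pow_div_factorial a)).mul_right _)
    (((summable_nat_add_iff 2).2 (Real.summable_pow_div_factorial b)).mul_right _)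
  intro n
  rw [div_mul_eq_mul_div, div_mul_eq_mul_div]
  apply div_le_div_of_nonneg_right _ (by positivity)
  calc a ^ (n + 2) * b ^ 2 ≤ |a| ^ (n + 2) * b ^ 2 := by
        apply mul_le_mul_of_nonneg_right _ (sq_nonneg b)
        calc a ^ (n + 2) ≤ |a ^ (n + 2)| := le_abs_self _
          _ = |a| ^ (n + 2) := by rw [abs_pow]
    _ = |a| ^ n * a ^ 2 * b ^ 2 := by rw [pow_add, sq_abs]
    _ ≤ b ^ n * a ^ 2 * b ^ 2 := by
        apply mul_le_mul_of_nonneg_right _ (sq_nonneg b)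
        exact mul_le_mul_of_nonneg_right (pow_le_pow_left₀ (abs_nonneg a) hab n) (sq_nonneg a)
    _ = b ^ (n + 2) * a ^ 2 := by ring

lemma exp_le_quad {l x M : ℝ} (hl : 0 ≤ l) (hM : 0 < M) (hx : |x| ≤ M) :
    Real.exp (l * x) ≤ 1 + l * x + ((Real.exp (l * M) - 1 - l * M) / M ^ 2) * x ^ 2 := by
  rcases eq_or_lt_of_le hl with rfl | hl'
  · simp
  have key := bennett_aux (a := l * x) (b := l * M)
    (by rw [abs_mul, abs_of_pos hl']; exact mul_le_mul_of_nonneg_left hx hl'.le)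
  have h2 : (Real.exp (l * x) - 1 - l * x) * M ^ 2 ≤ (Real.exp (l * M) - 1 - l * M) * x ^ 2 := by
    nlinarith [mul_pos hl' hl', sq_nonneg (l * x), sq_nonneg (l * M)]
  have h3 := (le_div_iff₀ (by positivity : (0:ℝ) < M ^ 2)).2 h2
  rw [div_mul_eq_mul_div]
  linarith

lemma supermart
    {Ω : Type*} [F : MeasurableSpace Ω] (P : Measure Ω) [IsProbabilityMeasure P]
    (r : ℕ) (ℱ : ℕ → MeasurableSpace Ω)
    (hmono : ∀ i j : ℕ, i ≤ j → j ≤ r → ℱ i ≤ ℱ j)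
    (hle : ∀ i : ℕ, i ≤ r → ℱ i ≤ F)
    (X : ℕ → Ω → ℝ)
    (hadapted : ∀ i : ℕ, i ≤ r → StronglyMeasurable[ℱ i] (X i))
    (M : ℝ) (hM : 0 < M)
    (hbdd : ∀ i : ℕ, 1 ≤ i → i ≤ r → ∀ᵐ ω ∂P, |X i ω| ≤ M)
    (hmd : ∀ i : ℕ, 1 ≤ i → i ≤ r → P[X i | ℱ (i - 1)] =ᵐ[P] 0)
    (l : ℝ) (hl : 0 ≤ l) :
    ∀ n : ℕ, n ≤ r →
      ∫ ω, Real.exp (l * (∑ i ∈ Finset.Icc 1 n, X i ω)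
        - (Real.exp (l * M) - 1 - l * M) / M ^ 2
          * (∑ i ∈ Finset.Icc 1 n, (P[fun ω' => (X i ω') ^ 2 | ℱ (i - 1)]) ω)) ∂P ≤ 1 := by
  set g := (Real.exp (l * M) - 1 - l * M) / M ^ 2 with hg_def
  have hg0 : 0 ≤ g := div_nonneg (by nlinarith [Real.add_one_le_exp (l * M)]) (sq_nonneg M)
  intro n
  induction n with
  | zero =>
    intro _
    simp
  | succ n IH =>
    intro hn1
    have hnr : n ≤ r := Nat.le_of_succ_le hn1
    have hIH := IH hnr
    have hmn : ℱ n ≤ F := hle n hnr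
    haveI : SigmaFinite (P.trim hmn) := inferInstance
    set Y : Ω → ℝ := X (n + 1) with hY_def
    have hYb : ∀ᵐ ω ∂P, |Y ω| ≤ M := hbdd (n + 1) (Nat.le_add_left 1 n) hn1
    have hYF : AEStronglyMeasurable Y P :=
      ((hadapted (n + 1) hn1).mono (hle (n + 1) hn1)).aestronglyMeasurable
    have hYint : Integrable Y P := by
      refine (integrable_const M).mono' hYF ?_
      filter_upwards [hYb] with ω h using by rwa [Real.norm_eq_abs]
    have hY2int : Integrable (fun ω => (Y ω) ^ 2) P := by
      refine (integrable_const (M ^ 2)).mono' ?_ ?_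
      · have : (fun ω => (Y ω) ^ 2) = fun ω => Y ω * Y ω := by funext ω; ring
        rw [this]; exact hYF.mul hYF
      · filter_upwards [hYb] with ω h
        rw [Real.norm_eq_abs, abs_pow]
        exact pow_le_pow_left₀ (abs_nonneg _) h 2
    set C : Ω → ℝ := P[fun ω' => (Y ω') ^ 2 | ℱ n] with hC_def
    set Sn : Ω → ℝ := fun ω => ∑ i ∈ Finset.Icc 1 n, X i ω with hSn_def
    set Vn : Ω → ℝ := fun ω => ∑ i ∈ Finset.Icc 1 n, (P[fun ω' => (X i ω') ^ 2 | ℱ (i - 1)]) ω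
      with hVn_def
    set f : Ω → ℝ := fun ω => Real.exp (l * Sn ω - g * (Vn ω + C ω)) with hf_def
    -- split of sums
    have hsplit : ∀ ω, (∑ i ∈ Finset.Icc 1 (n + 1), X i ω) = Sn ω + Y ω := fun ω =>
      Finset.sum_Icc_succ_top (Nat.le_add_left 1 n) _
    have hsplitC : ∀ ω, (∑ i ∈ Finset.Icc 1 (n + 1), (P[fun ω' => (X i ω') ^ 2 | ℱ (i - 1)]) ω)
        = Vn ω + C ω := by
      intro ω
      rw [Finset.sum_Icc_succ_top (Nat.le_add_left 1 n)]
      rfl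
    -- measurability w.r.t. ℱ n
    have hSnm : StronglyMeasurable[ℱ n] Sn := by
      apply Finset.stronglyMeasurable_fun_sum _
      intro i hi
      obtain ⟨hi1, hi2⟩ := Finset.mem_Icc.1 hi
      exact (hadapted i (hi2.trans hnr)).mono (hmono i n hi2 hnr)
    have hVnm : StronglyMeasurable[ℱ n] Vn := by
      apply Finset.stronglyMeasurable_fun_sum _
      intro i hi
      obtain ⟨hi1, hi2⟩ := Finset.mem_Icc.1 hi
      exact stronglyMeasurable_condExp.mono (hmono (i - 1) n (by omega) hnr)
    have hCm : StronglyMeasurable[ℱ n] C := stronglyMeasurable_condExp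
    have hfm : StronglyMeasurable[ℱ n] f :=
      Real.continuous_exp.comp_stronglyMeasurable
        ((hSnm.const_mul l).sub ((hVnm.add hCm).const_mul g))
    -- a.e. bounds
    have hSb : ∀ᵐ ω ∂P, |Sn ω| ≤ n * M := by
      have hball : ∀ᵐ ω ∂P, ∀ i ∈ Finset.Icc 1 n, |X i ω| ≤ M := by
        rw [Finset.eventually_all]
        intro i hi
        obtain ⟨hi1, hi2⟩ := Finset.mem_Icc.1 hi
        exact hbdd i hi1 (hi2.trans hnr)
      filter_upwards [hball] with ω h
      calc |Sn ω| ≤ ∑ i ∈ Finset.Icc 1 n, |X i ω| := Finset.abs_sum_le_sum_abs _ _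
        _ ≤ ∑ i ∈ Finset.Icc 1 n, M := Finset.sum_le_sum h
        _ = n * M := by
            rw [Finset.sum_const, Nat.card_Icc]
            simp
    have hVnn : ∀ᵐ ω ∂P, 0 ≤ Vn ω := by
      have hball : ∀ᵐ ω ∂P, ∀ i ∈ Finset.Icc 1 n,
          0 ≤ (P[fun ω' => (X i ω') ^ 2 | ℱ (i - 1)]) ω := by
        rw [Finset.eventually_all]
        intro i hi
        exact condExp_nonneg (ae_of_all _ fun ω' => sq_nonneg _)
      filter_upwards [hball] with ω h using Finset.sum_nonneg h
    have hCnn : ∀ᵐ ω ∂P, 0 ≤ C ω := condExp_nonneg (ae_of_all _ fun ω' => sq_nonneg _)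
    -- integrability
    have hfF : AEStronglyMeasurable f P := (hfm.mono hmn).aestronglyMeasurable
    have hfb : ∀ᵐ ω ∂P, ‖f ω‖ ≤ Real.exp (l * (n * M)) := by
      filter_upwards [hSb, hVnn, hCnn] with ω h1 h2 h3
      rw [Real.norm_eq_abs, abs_of_pos (Real.exp_pos _), Real.exp_le_exp]
      have : l * Sn ω ≤ l * (n * M) :=
        mul_le_mul_of_nonneg_left (le_trans (le_abs_self _) h1) hl
      nlinarith
    have hfint : Integrable f P := (integrable_const _).mono' hfF hfb
    have hEm : AEStronglyMeasurable (fun ω => Real.exp (l * Y ω)) P :=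
      Real.continuous_exp.comp_aestronglyMeasurable (hYF.const_mul l)
    have hEb : ∀ᵐ ω ∂P, ‖Real.exp (l * Y ω)‖ ≤ Real.exp (l * M) := by
      filter_upwards [hYb] with ω h
      rw [Real.norm_eq_abs, abs_of_pos (Real.exp_pos _), Real.exp_le_exp]
      exact mul_le_mul_of_nonneg_left (le_trans (le_abs_self _) h) hl
    have hEint : Integrable (fun ω => Real.exp (l * Y ω)) P := (integrable_const _).mono' hEm hEb
    have hfEint : Integrable (f * fun ω => Real.exp (l * Y ω)) P := by
      refine (integrable_const (Real.exp (l * (n * M)) * Real.exp (l * M))).mono'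
        (hfF.mul hEm) ?_
      filter_upwards [hfb, hEb] with ω h1 h2
      rw [Pi.mul_apply, norm_mul]
      exact mul_le_mul h1 h2 (norm_nonneg _) (le_trans (norm_nonneg _) h1)
    -- quadratic bound
    set q : Ω → ℝ := fun ω => 1 + l * Y ω + g * (Y ω) ^ 2 with hq_def
    have hqint : Integrable q P :=
      ((integrable_const (1:ℝ)).add (hYint.const_mul l)).add (hY2int.const_mul g)
    have hptwise : ∀ᵐ ω ∂P, Real.exp (l * Y ω) ≤ q ω := by
      filter_upwards [hYb] with ω h using exp_le_quad hl hM h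
    have h1 : P[fun ω => Real.exp (l * Y ω)|ℱ n] ≤ᵐ[P] P[q|ℱ n] :=
      condExp_mono hEint hqint hptwise
    have hc : P[fun ω => l * Y ω|ℱ n] =ᵐ[P] fun ω => l * (P[Y|ℱ n]) ω := condExp_smul l Y (ℱ n)
    have hd : P[fun ω => g * (Y ω) ^ 2|ℱ n] =ᵐ[P] fun ω => g * C ω :=
      condExp_smul g (fun ω => (Y ω) ^ 2) (ℱ n)
    have ha : P[q|ℱ n] =ᵐ[P]
        P[fun ω => 1 + l * Y ω|ℱ n] + P[fun ω => g * (Y ω) ^ 2|ℱ n] :=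
      condExp_add ((integrable_const (1:ℝ)).add (hYint.const_mul l)) (hY2int.const_mul g) (ℱ n)
    have hb : P[fun ω => 1 + l * Y ω|ℱ n] =ᵐ[P]
        P[fun _ => (1:ℝ)|ℱ n] + P[fun ω => l * Y ω|ℱ n] :=
      condExp_add (integrable_const (1:ℝ)) (hYint.const_mul l) (ℱ n)
    have he : P[fun _ => (1:ℝ)|ℱ n] = fun _ => (1:ℝ) := condExp_const hmn 1
    have hmd' : P[Y|ℱ n] =ᵐ[P] 0 := hmd (n + 1) (Nat.le_add_left 1 n) hn1
    have h2 : P[q|ℱ n] =ᵐ[P] fun ω => 1 + g * C ω := by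
      filter_upwards [ha, hb, hc, hd, hmd'] with ω ea eb ec ed em
      rw [ea, Pi.add_apply, eb, Pi.add_apply, he, ec, ed, em]
      simp
    -- the key a.e. bound
    have hpull := condExp_mul_of_stronglyMeasurable_left hfm hfEint hEint
    have hchain : ∀ᵐ ω ∂P, (P[f * fun ω => Real.exp (l * Y ω)|ℱ n]) ω
        ≤ Real.exp (l * Sn ω - g * Vn ω) := by
      filter_upwards [hpull, h1, h2, hCnn] with ω hp hh1 hh2 hc0
      rw [hp, Pi.mul_apply]
      have hbound : (P[fun ω => Real.exp (l * Y ω)|ℱ n]) ω ≤ Real.exp (g * C ω) := by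
        calc (P[fun ω => Real.exp (l * Y ω)|ℱ n]) ω ≤ (P[q|ℱ n]) ω := hh1
          _ = 1 + g * C ω := hh2
          _ ≤ Real.exp (g * C ω) := by
              have := Real.add_one_le_exp (g * C ω); linarith
      calc f ω * (P[fun ω => Real.exp (l * Y ω)|ℱ n]) ω
          ≤ f ω * Real.exp (g * C ω) :=
            mul_le_mul_of_nonneg_left hbound (Real.exp_pos _).le
        _ = Real.exp (l * Sn ω - g * Vn ω) := by
            rw [hf_def, ← Real.exp_add]
            congr 1
            ring
    have hintSV : Integrable (fun ω => Real.exp (l * Sn ω - g * Vn ω)) P := by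
      refine (integrable_const (Real.exp (l * (n * M)))).mono'
        ((Real.continuous_exp.comp_stronglyMeasurable
          ((hSnm.const_mul l).sub (hVnm.const_mul g))).mono hmn).aestronglyMeasurable ?_
      filter_upwards [hSb, hVnn] with ω h1 h2
      rw [Real.norm_eq_abs, abs_of_pos (Real.exp_pos _), Real.exp_le_exp]
      have : l * Sn ω ≤ l * (n * M) :=
        mul_le_mul_of_nonneg_left (le_trans (le_abs_self _) h1) hl
      nlinarith
    -- put it together
    have heq : (fun ω => Real.exp (l * (∑ i ∈ Finset.Icc 1 (n + 1), X i ω)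
        - g * (∑ i ∈ Finset.Icc 1 (n + 1), (P[fun ω' => (X i ω') ^ 2 | ℱ (i - 1)]) ω)))
        = f * fun ω => Real.exp (l * Y ω) := by
      funext ω
      rw [hsplit ω, hsplitC ω, Pi.mul_apply, hf_def, ← Real.exp_add]
      congr 1
      ring
    calc ∫ ω, Real.exp (l * (∑ i ∈ Finset.Icc 1 (n + 1), X i ω)
          - g * (∑ i ∈ Finset.Icc 1 (n + 1), (P[fun ω' => (X i ω') ^ 2 | ℱ (i - 1)]) ω)) ∂P
        = ∫ ω, (f * fun ω => Real.exp (l * Y ω)) ω ∂P := by rw [heq]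
      _ = ∫ ω, (P[f * fun ω => Real.exp (l * Y ω)|ℱ n]) ω ∂P :=
          (integral_condExp hmn).symm
      _ ≤ ∫ ω, Real.exp (l * Sn ω - g * Vn ω) ∂P :=
          integral_mono_ae integrable_condExp hintSV hchain
      _ ≤ 1 := hIH


lemma expo_eq (M σ t : ℝ) (hM : M ≠ 0) (hσ : σ ≠ 0) :
    ((1 + t * M / σ ^ 2) - 1 - Real.log (1 + t * M / σ ^ 2)) / M ^ 2 * σ ^ 2
      - Real.log (1 + t * M / σ ^ 2) / M * t
      = -(σ ^ 2 / M ^ 2) * bennett (t * M / σ ^ 2) := by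
  rw [bennett]
  have h : Real.log (t * M / σ ^ 2 + 1) = Real.log (1 + t * M / σ ^ 2) := by ring_nf
  rw [h]
  field_simp
  ring

/-- Bennett-type inequality for martingale differences (Fan et al.):
if `|X_i| ≤ M` a.s. and `Σ_i E[X_i² | F_{i−1}] ≤ σ²` a.s., then
`Pr[Σ X_i ≥ t] ≤ exp(−(σ²/M²)·𝒞(tM/σ²))`. -/
theorem martingale_bennett
    {Ω : Type*} [F : MeasurableSpace Ω] (P : Measure Ω) [IsProbabilityMeasure P]
    (r : ℕ) (ℱ : ℕ → MeasurableSpace Ω)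
    (hℱ0 : ℱ 0 = ⊥)
    (hmono : ∀ i j : ℕ, i ≤ j → j ≤ r → ℱ i ≤ ℱ j)
    (hle : ∀ i : ℕ, i ≤ r → ℱ i ≤ F)
    (X : ℕ → Ω → ℝ)
    (hX0 : X 0 = 0)
    (hadapted : ∀ i : ℕ, i ≤ r → StronglyMeasurable[ℱ i] (X i))
    (M σ : ℝ) (hM : 0 < M) (hσ : 0 < σ)
    (hbdd : ∀ i : ℕ, 1 ≤ i → i ≤ r → ∀ᵐ ω ∂P, |X i ω| ≤ M)
    (hmd : ∀ i : ℕ, 1 ≤ i → i ≤ r → P[X i | ℱ (i - 1)] =ᵐ[P] 0)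
    (hvar : ∀ᵐ ω ∂P,
      ∑ i ∈ Finset.Icc 1 r, (P[fun ω' => (X i ω') ^ 2 | ℱ (i - 1)]) ω ≤ σ ^ 2) :
    ∀ t : ℝ, 0 ≤ t →
      (P {ω | t ≤ ∑ i ∈ Finset.Icc 1 r, X i ω}).toReal ≤
        Real.exp (-(σ ^ 2 / M ^ 2) * bennett (t * M / σ ^ 2)) := by
  intro t ht
  have hσ2 : (0:ℝ) < σ ^ 2 := by positivity
  rcases eq_or_lt_of_le ht with h0 | ht'
  · rw [← h0]
    have hb0 : bennett (0 * M / σ ^ 2) = 0 := by simp [bennett]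
    rw [hb0, mul_zero, Real.exp_zero]
    calc (P {ω | 0 ≤ ∑ i ∈ Finset.Icc 1 r, X i ω}).toReal
        ≤ (P Set.univ).toReal :=
          ENNReal.toReal_mono (measure_ne_top P _) (measure_mono (Set.subset_univ _))
      _ = 1 := by simp
  · set u := t * M / σ ^ 2 with hu_def
    have hu : 0 < u := by positivity
    set l := Real.log (1 + u) / M with hl_def
    have hl : 0 < l := div_pos (Real.log_pos (by linarith)) hM
    have helM : l * M = Real.log (1 + u) := by
      rw [hl_def, div_mul_cancel₀ _ hM.ne']
    have hexp : Real.exp (l * M) = 1 + u := by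
      rw [helM, Real.exp_log (by linarith)]
    set g := (Real.exp (l * M) - 1 - l * M) / M ^ 2 with hg_def
    have hg0 : 0 ≤ g := div_nonneg (by nlinarith [Real.add_one_le_exp (l * M)]) (sq_nonneg M)
    have key := supermart P r ℱ hmono hle X hadapted M hM hbdd hmd l hl.le r le_rfl
    -- measurability and bounds for S := sum
    have hSm : StronglyMeasurable[F] (fun ω => ∑ i ∈ Finset.Icc 1 r, X i ω) := by
      apply Finset.stronglyMeasurable_fun_sum _
      intro i hi
      exact (hadapted i (Finset.mem_Icc.1 hi).2).mono (hle i (Finset.mem_Icc.1 hi).2)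
    have hSb : ∀ᵐ ω ∂P, |∑ i ∈ Finset.Icc 1 r, X i ω| ≤ r * M := by
      have hball : ∀ᵐ ω ∂P, ∀ i ∈ Finset.Icc 1 r, |X i ω| ≤ M := by
        rw [Finset.eventually_all]
        intro i hi
        exact hbdd i (Finset.mem_Icc.1 hi).1 (Finset.mem_Icc.1 hi).2
      filter_upwards [hball] with ω h
      calc |∑ i ∈ Finset.Icc 1 r, X i ω| ≤ ∑ i ∈ Finset.Icc 1 r, |X i ω| :=
            Finset.abs_sum_le_sum_abs _ _
        _ ≤ ∑ i ∈ Finset.Icc 1 r, M := Finset.sum_le_sum h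
        _ = r * M := by rw [Finset.sum_const, Nat.card_Icc]; simp
    have hintS : Integrable (fun ω => Real.exp (l * ∑ i ∈ Finset.Icc 1 r, X i ω)) P := by
      refine (integrable_const (Real.exp (l * (r * M)))).mono'
        (Real.continuous_exp.comp_aestronglyMeasurable
          (hSm.aestronglyMeasurable.const_mul l)) ?_
      filter_upwards [hSb] with ω h
      rw [Real.norm_eq_abs, abs_of_pos (Real.exp_pos _), Real.exp_le_exp]
      exact mul_le_mul_of_nonneg_left (le_trans (le_abs_self _) h) hl.le
    have hVnn : ∀ᵐ ω ∂P,
        0 ≤ ∑ i ∈ Finset.Icc 1 r, (P[fun ω' => (X i ω') ^ 2 | ℱ (i - 1)]) ω := by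
      have hball : ∀ᵐ ω ∂P, ∀ i ∈ Finset.Icc 1 r,
          0 ≤ (P[fun ω' => (X i ω') ^ 2 | ℱ (i - 1)]) ω := by
        rw [Finset.eventually_all]
        intro i hi
        exact condExp_nonneg (ae_of_all _ fun ω' => sq_nonneg _)
      filter_upwards [hball] with ω h using Finset.sum_nonneg h
    have hVm : StronglyMeasurable[F]
        (fun ω => ∑ i ∈ Finset.Icc 1 r, (P[fun ω' => (X i ω') ^ 2 | ℱ (i - 1)]) ω) := by
      apply Finset.stronglyMeasurable_fun_sum _
      intro i hi
      exact stronglyMeasurable_condExp.mono (hle (i - 1) (by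
        have := (Finset.mem_Icc.1 hi).2; omega))
    have hintSV : Integrable (fun ω => Real.exp
        (l * (∑ i ∈ Finset.Icc 1 r, X i ω)
          - g * (∑ i ∈ Finset.Icc 1 r, (P[fun ω' => (X i ω') ^ 2 | ℱ (i - 1)]) ω))) P := by
      refine (integrable_const (Real.exp (l * (r * M)))).mono'
        (Real.continuous_exp.comp_aestronglyMeasurable
          (((hSm.const_mul l).sub (hVm.const_mul g)).aestronglyMeasurable)) ?_
      filter_upwards [hSb, hVnn] with ω h1 h2
      rw [Real.norm_eq_abs, abs_of_pos (Real.exp_pos _), Real.exp_le_exp]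
      have : l * (∑ i ∈ Finset.Icc 1 r, X i ω) ≤ l * (r * M) :=
        mul_le_mul_of_nonneg_left (le_trans (le_abs_self _) h1) hl.le
      nlinarith
    -- integral bound
    have hES : ∫ ω, Real.exp (l * ∑ i ∈ Finset.Icc 1 r, X i ω) ∂P
        ≤ Real.exp (g * σ ^ 2) := by
      have hstep : ∀ᵐ ω ∂P, Real.exp (l * ∑ i ∈ Finset.Icc 1 r, X i ω)
          ≤ Real.exp (l * (∑ i ∈ Finset.Icc 1 r, X i ω)
              - g * (∑ i ∈ Finset.Icc 1 r, (P[fun ω' => (X i ω') ^ 2 | ℱ (i - 1)]) ω))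
            * Real.exp (g * σ ^ 2) := by
        filter_upwards [hvar] with ω hv
        rw [← Real.exp_add, Real.exp_le_exp]
        have := mul_le_mul_of_nonneg_left hv hg0
        linarith
      calc ∫ ω, Real.exp (l * ∑ i ∈ Finset.Icc 1 r, X i ω) ∂P
          ≤ ∫ ω, Real.exp (l * (∑ i ∈ Finset.Icc 1 r, X i ω)
              - g * (∑ i ∈ Finset.Icc 1 r, (P[fun ω' => (X i ω') ^ 2 | ℱ (i - 1)]) ω))
            * Real.exp (g * σ ^ 2) ∂P :=
            integral_mono_ae hintS (hintSV.mul_const _) hstep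
        _ = (∫ ω, Real.exp (l * (∑ i ∈ Finset.Icc 1 r, X i ω)
              - g * (∑ i ∈ Finset.Icc 1 r, (P[fun ω' => (X i ω') ^ 2 | ℱ (i - 1)]) ω)) ∂P)
            * Real.exp (g * σ ^ 2) := integral_mul_const _ _
        _ ≤ 1 * Real.exp (g * σ ^ 2) := by
            apply mul_le_mul_of_nonneg_right _ (Real.exp_pos _).le
            exact key
        _ = Real.exp (g * σ ^ 2) := one_mul _
    -- Markov
    have markov := mul_meas_ge_le_integral_of_nonneg
      (μ := P) (f := fun ω => Real.exp (l * ∑ i ∈ Finset.Icc 1 r, X i ω))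
      (ae_of_all _ fun ω => (Real.exp_pos _).le) hintS (Real.exp (l * t))
    have hset : {ω : Ω | t ≤ ∑ i ∈ Finset.Icc 1 r, X i ω}
        = {ω : Ω | Real.exp (l * t) ≤ Real.exp (l * ∑ i ∈ Finset.Icc 1 r, X i ω)} := by
      ext ω
      simp only [Set.mem_setOf_eq, Real.exp_le_exp]
      exact (mul_le_mul_iff_right₀ hl).symm
    have h5 : (P {ω | t ≤ ∑ i ∈ Finset.Icc 1 r, X i ω}).toReal
        ≤ Real.exp (g * σ ^ 2 - l * t) := by
      rw [hset, Real.exp_sub, le_div_iff₀ (Real.exp_pos (l * t))]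
      calc (P {ω : Ω | Real.exp (l * t)
              ≤ Real.exp (l * ∑ i ∈ Finset.Icc 1 r, X i ω)}).toReal * Real.exp (l * t)
          = Real.exp (l * t) * (P {ω : Ω | Real.exp (l * t)
              ≤ Real.exp (l * ∑ i ∈ Finset.Icc 1 r, X i ω)}).toReal := mul_comm _ _
        _ ≤ ∫ ω, Real.exp (l * ∑ i ∈ Finset.Icc 1 r, X i ω) ∂P := markov
        _ ≤ Real.exp (g * σ ^ 2) := hES
    have hexpo : g * σ ^ 2 - l * t = -(σ ^ 2 / M ^ 2) * bennett u := by
      rw [hg_def, hexp, helM, hl_def, hu_def]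
      exact expo_eq M σ t hM.ne' hσ.ne'
    rw [hexpo] at h5
    exact h5
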